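/- Let p : S' → S be a schematically dominant and universally submersive morphism of schemes. Then p is an epimorphism in the category of schemes: for any scheme X, the map Hom(S, X) → Hom(S', X) is injective. -/

import Mathlib

open AlgebraicGeometry CategoryTheory Topology

universe u

private lemma appLE_congr_hom {X Y : Scheme.{u}} {a b : X ⟶ Y} (h : a = b)
    (U : Y.Opens) (W : X.Opens) (e : W ≤ a ⁻¹ᵁ U) :
    a.appLE U W e = b.appLE U W (h ▸ e) := by subst h; rfl

/-- A schematically dominant (i.e. `O_S → p_* O_{S'}` injective) and universally
submersive morphism of schemes is an epimorphism in the category of schemes. -/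
theorem stmt19 {S' S : Scheme.{u}} (p : S' ⟶ S)
    (hdom : ∀ U : S.Opens, Function.Injective (p.app U))
    (hsub : (AlgebraicGeometry.topologically
        fun {α β} _ _ f => IsQuotientMap f).universally p) :
    ∀ (X : Scheme.{u}) (f g : S ⟶ X), p ≫ f = p ≫ g → f = g := by
  intro X f g h
  have hq : IsQuotientMap p.base :=
    MorphismProperty.universally_le
      (AlgebraicGeometry.topologically fun {α β} _ _ f => IsQuotientMap f) p hsub
  have hsurj : Function.Surjective p.base := hq.surjective
  have hbase : f.base = g.base := by
    ext s
    obtain ⟨s', rfl⟩ := hsurj s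
    have := congrArg (fun m : S' ⟶ X => m.base s') h
    simpa using this
  refine Scheme.Hom.ext hbase fun U => ?_
  rw [Scheme.Hom.app_eq_appLE f, Scheme.Hom.appLE_map, Scheme.Hom.app_eq_appLE g]
  have hmono : Mono (p.appLE (g ⁻¹ᵁ U) (p ⁻¹ᵁ (g ⁻¹ᵁ U)) le_rfl) := by
    rw [Scheme.Hom.appLE_eq_app]
    exact ConcreteCategory.mono_of_injective _ (hdom _)
  rw [← cancel_mono (p.appLE (g ⁻¹ᵁ U) (p ⁻¹ᵁ (g ⁻¹ᵁ U)) le_rfl),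
    Scheme.Hom.appLE_comp_appLE, Scheme.Hom.appLE_comp_appLE, appLE_congr_hom h]
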